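/- Let U, V, R be real-valued random variables on a probability space such that R ≥ 0 almost surely, the triple (U, V, R) has the same joint distribution as (V, U, R), and a U² + b V² + R > 0 almost surely, where a ≥ b > 0 are real constants. Then E[U² / (a U² + b V² + R)] ≤ E[V² / (a U² + b V² + R)]. (Core inequality in the proof of Theorem 2.) -/

import Mathlib

open MeasureTheory ProbabilityTheory

/-- Core inequality in the proof of Theorem 2: if `(U, V, R)` has the same
joint distribution as `(V, U, R)`, `R ≥ 0` a.s., `a ≥ b > 0` and
`a U² + b V² + R > 0` a.s., then
`E[U² / (a U² + b V² + R)] ≤ E[V² / (a U² + b V² + R)]`. -/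
theorem pass_core_inequality
    {Ω : Type*} [MeasurableSpace Ω] (P : Measure Ω) [IsProbabilityMeasure P]
    (U V R : Ω → ℝ) (a b : ℝ) (hb : 0 < b) (hab : b ≤ a)
    (hR : ∀ᵐ ω ∂P, 0 ≤ R ω)
    (hswap : IdentDistrib (fun ω => (U ω, V ω, R ω)) (fun ω => (V ω, U ω, R ω)) P P)
    (hpos : ∀ᵐ ω ∂P, 0 < a * U ω ^ 2 + b * V ω ^ 2 + R ω) :
    ∫ ω, U ω ^ 2 / (a * U ω ^ 2 + b * V ω ^ 2 + R ω) ∂P ≤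
      ∫ ω, V ω ^ 2 / (a * U ω ^ 2 + b * V ω ^ 2 + R ω) ∂P := by
  have hfm : AEMeasurable (fun ω => (U ω, V ω, R ω)) P := hswap.aemeasurable_fst
  have hgm : AEMeasurable (fun ω => (V ω, U ω, R ω)) P := hswap.aemeasurable_snd
  have hU : AEMeasurable U P := measurable_fst.comp_aemeasurable hfm
  have hV : AEMeasurable V P := (measurable_fst.comp measurable_snd).comp_aemeasurable hfm
  have hRm : AEMeasurable R P := (measurable_snd.comp measurable_snd).comp_aemeasurable hfm
  have hDm : AEMeasurable (fun ω => a * U ω ^ 2 + b * V ω ^ 2 + R ω) P :=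
    ((((hU.pow_const 2).const_mul a).add ((hV.pow_const 2).const_mul b)).add hRm)
  have hD'm : AEMeasurable (fun ω => a * V ω ^ 2 + b * U ω ^ 2 + R ω) P :=
    ((((hV.pow_const 2).const_mul a).add ((hU.pow_const 2).const_mul b)).add hRm)
  -- D' > 0 a.s.
  have hS : MeasurableSet {p : ℝ × ℝ × ℝ | 0 < a * p.1 ^ 2 + b * p.2.1 ^ 2 + p.2.2} := by
    apply measurableSet_lt measurable_const
    fun_prop
  have hpos' : ∀ᵐ ω ∂P, 0 < a * V ω ^ 2 + b * U ω ^ 2 + R ω := by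
    have h1 : ∀ᵐ p ∂(P.map (fun ω => (U ω, V ω, R ω))),
        p ∈ {p : ℝ × ℝ × ℝ | 0 < a * p.1 ^ 2 + b * p.2.1 ^ 2 + p.2.2} :=
      (ae_map_iff hfm hS).2 hpos
    rw [hswap.map_eq] at h1
    exact (ae_map_iff hgm hS).1 h1
  -- integrability helper
  have key : ∀ (W E : Ω → ℝ), AEMeasurable W P → AEMeasurable E P →
      (∀ᵐ ω ∂P, 0 < E ω) → (∀ᵐ ω ∂P, b * W ω ^ 2 ≤ E ω) →
      Integrable (fun ω => W ω ^ 2 / E ω) P := by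
    intro W E hW hE hEpos hbd
    refine (integrable_const (1 / b)).mono' ((hW.pow_const 2).div hE).aestronglyMeasurable ?_
    filter_upwards [hEpos, hbd] with ω h1 h2
    rw [Real.norm_eq_abs, abs_of_nonneg (div_nonneg (sq_nonneg _) h1.le)]
    rw [div_le_div_iff₀ h1 hb]
    nlinarith
  have hbd1 : ∀ᵐ ω ∂P, b * U ω ^ 2 ≤ a * U ω ^ 2 + b * V ω ^ 2 + R ω := by
    filter_upwards [hR] with ω h; nlinarith [sq_nonneg (U ω), sq_nonneg (V ω)]
  have hbd2 : ∀ᵐ ω ∂P, b * V ω ^ 2 ≤ a * U ω ^ 2 + b * V ω ^ 2 + R ω := by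
    filter_upwards [hR] with ω h; nlinarith [sq_nonneg (U ω), sq_nonneg (V ω)]
  have hbd3 : ∀ᵐ ω ∂P, b * U ω ^ 2 ≤ a * V ω ^ 2 + b * U ω ^ 2 + R ω := by
    filter_upwards [hR] with ω h; nlinarith [sq_nonneg (U ω), sq_nonneg (V ω)]
  have hbd4 : ∀ᵐ ω ∂P, b * V ω ^ 2 ≤ a * V ω ^ 2 + b * U ω ^ 2 + R ω := by
    filter_upwards [hR] with ω h; nlinarith [sq_nonneg (U ω), sq_nonneg (V ω)]
  have iUD := key U _ hU hDm hpos hbd1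
  have iVD := key V _ hV hDm hpos hbd2
  have iUD' := key U _ hU hD'm hpos' hbd3
  have iVD' := key V _ hV hD'm hpos' hbd4
  -- identdistrib integral equalities
  have hφ : Measurable (fun p : ℝ × ℝ × ℝ => p.1 ^ 2 / (a * p.1 ^ 2 + b * p.2.1 ^ 2 + p.2.2)) := by
    fun_prop
  have hψ : Measurable (fun p : ℝ × ℝ × ℝ => p.2.1 ^ 2 / (a * p.1 ^ 2 + b * p.2.1 ^ 2 + p.2.2)) := by
    fun_prop
  have e1 : ∫ ω, U ω ^ 2 / (a * U ω ^ 2 + b * V ω ^ 2 + R ω) ∂P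
      = ∫ ω, V ω ^ 2 / (a * V ω ^ 2 + b * U ω ^ 2 + R ω) ∂P := by
    have := (hswap.comp hφ).integral_eq
    simpa [Function.comp] using this
  have e2 : ∫ ω, V ω ^ 2 / (a * U ω ^ 2 + b * V ω ^ 2 + R ω) ∂P
      = ∫ ω, U ω ^ 2 / (a * V ω ^ 2 + b * U ω ^ 2 + R ω) ∂P := by
    have := (hswap.comp hψ).integral_eq
    simpa [Function.comp] using this
  -- pointwise inequality for the difference
  have hmono : ∀ᵐ ω ∂P,
      (U ω ^ 2 - V ω ^ 2) / (a * U ω ^ 2 + b * V ω ^ 2 + R ω) ≤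
      (U ω ^ 2 - V ω ^ 2) / (a * V ω ^ 2 + b * U ω ^ 2 + R ω) := by
    filter_upwards [hpos, hpos'] with ω h1 h2
    rw [div_le_div_iff₀ h1 h2]
    nlinarith [mul_nonneg (sub_nonneg.2 hab) (sq_nonneg (U ω ^ 2 - V ω ^ 2))]
  have isub1 : Integrable (fun ω => (U ω ^ 2 - V ω ^ 2) / (a * U ω ^ 2 + b * V ω ^ 2 + R ω)) P := by
    have := iUD.sub iVD
    simpa [sub_div, Pi.sub_def] using this
  have isub2 : Integrable (fun ω => (U ω ^ 2 - V ω ^ 2) / (a * V ω ^ 2 + b * U ω ^ 2 + R ω)) P := by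
    have := iUD'.sub iVD'
    simpa [sub_div, Pi.sub_def] using this
  have hint := integral_mono_ae isub1 isub2 hmono
  have eq1 : ∫ ω, (U ω ^ 2 - V ω ^ 2) / (a * U ω ^ 2 + b * V ω ^ 2 + R ω) ∂P
      = (∫ ω, U ω ^ 2 / (a * U ω ^ 2 + b * V ω ^ 2 + R ω) ∂P)
        - ∫ ω, V ω ^ 2 / (a * U ω ^ 2 + b * V ω ^ 2 + R ω) ∂P := by
    rw [← integral_sub iUD iVD]
    simp [sub_div]
  have eq2 : ∫ ω, (U ω ^ 2 - V ω ^ 2) / (a * V ω ^ 2 + b * U ω ^ 2 + R ω) ∂P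
      = (∫ ω, U ω ^ 2 / (a * V ω ^ 2 + b * U ω ^ 2 + R ω) ∂P)
        - ∫ ω, V ω ^ 2 / (a * V ω ^ 2 + b * U ω ^ 2 + R ω) ∂P := by
    rw [← integral_sub iUD' iVD']
    simp [sub_div]
  rw [eq1, eq2] at hint
  linarith [hint, e1, e2]
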